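/- Let p be a prime and let α, β, γ, δ be positive integers with 0 ≤ γ − δ ≤ min{α, β}, and let G = G(α,β,γ,δ) with central subgroup C = ⟨c⟩. Then every normal subgroup K of G with K·C = G contains c^{p^δ}, and there exists a normal subgroup K of G with K·C = G and K ∩ C = ⟨c^{p^δ}⟩. Consequently, the minimum of |K ∩ C| over normal subgroups K with K·C = G equals p^{γ−δ}. -/

import Mathlib

open scoped commutatorElement

/-- The relators for the presentation
`⟨a, b, c ∣ [a,c] = [b,c] = 1 = a^{p^α} = b^{p^β} = c^{p^γ}, [a,b] = c^{p^δ}⟩`,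
where `a`, `b`, `c` are the generators indexed by `0`, `1`, `2 : Fin 3`. -/
def pgRels (p α β γ δ : ℕ) : Set (FreeGroup (Fin 3)) :=
  {⁅FreeGroup.of (0 : Fin 3), FreeGroup.of (2 : Fin 3)⁆, ⁅FreeGroup.of (1 : Fin 3), FreeGroup.of (2 : Fin 3)⁆,
    FreeGroup.of (0 : Fin 3) ^ p ^ α, FreeGroup.of (1 : Fin 3) ^ p ^ β, FreeGroup.of (2 : Fin 3) ^ p ^ γ,
    ⁅FreeGroup.of (0 : Fin 3), FreeGroup.of (1 : Fin 3)⁆ * (FreeGroup.of (2 : Fin 3) ^ p ^ δ)⁻¹}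

/-- The group `G(α,β,γ,δ)` with presentation
`⟨a, b, c ∣ [a,c] = [b,c] = 1 = a^{p^α} = b^{p^β} = c^{p^γ}, [a,b] = c^{p^δ}⟩`. -/
abbrev GG (p α β γ δ : ℕ) : Type := PresentedGroup (pgRels p α β γ δ)

/-- The generator `a` of `G(α,β,γ,δ)`. -/
def ga (p α β γ δ : ℕ) : GG p α β γ δ := PresentedGroup.of (0 : Fin 3)
/-- The generator `b` of `G(α,β,γ,δ)`. -/
def gb (p α β γ δ : ℕ) : GG p α β γ δ := PresentedGroup.of (1 : Fin 3)
/-- The generator `c` of `G(α,β,γ,δ)`. -/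
def gc (p α β γ δ : ℕ) : GG p α β γ δ := PresentedGroup.of (2 : Fin 3)


namespace GGaux

lemma pow_mul_mod (p γ δ : ℕ) (n : ℕ) :
    (p : ZMod (p^γ))^δ * ((n % p^(γ-δ) : ℕ) : ZMod (p^γ)) = (p : ZMod (p^γ))^δ * (n : ZMod (p^γ)) := by
  have key : (p : ZMod (p^γ))^δ * (p : ZMod (p^γ))^(γ-δ) = 0 := by
    rw [← pow_add, show δ + (γ-δ) = γ + (δ - γ) by omega, pow_add]
    have h0 : (p : ZMod (p^γ))^γ = 0 := by
      have := ZMod.natCast_self (p^γ)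
      push_cast at this
      exact this
    rw [h0, zero_mul]
  conv_rhs => rw [← Nat.div_add_mod n (p^(γ-δ))]
  push_cast
  rw [mul_add, ← mul_assoc, key, zero_mul, zero_add]

/-- The 2-cocycle used to build the model group. -/
def hB (p α β γ δ : ℕ) (x : ZMod (p^α)) (y : ZMod (p^β)) : ZMod (p^γ) :=
  if h : 0 < p ∧ γ - δ ≤ α ∧ γ - δ ≤ β then
    (p : ZMod (p^γ))^δ *
      (((ZMod.castHom (pow_dvd_pow p h.2.1) (ZMod (p^(γ-δ))) x) *
        (ZMod.castHom (pow_dvd_pow p h.2.2) (ZMod (p^(γ-δ))) y)).val : ZMod (p^γ))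
  else 0

lemma iota_add (p γ δ : ℕ) (hp : 0 < p) (s t : ZMod (p^(γ-δ))) :
    (p : ZMod (p^γ))^δ * (((s+t).val : ℕ) : ZMod (p^γ)) =
      (p : ZMod (p^γ))^δ * ((s.val : ℕ) : ZMod (p^γ)) +
      (p : ZMod (p^γ))^δ * ((t.val : ℕ) : ZMod (p^γ)) := by
  haveI : NeZero (p^(γ-δ)) := ⟨(pow_pos hp _).ne'⟩
  rw [ZMod.val_add, pow_mul_mod, Nat.cast_add, mul_add]

lemma hB_add_left (p α β γ δ : ℕ) (x x' : ZMod (p^α)) (y : ZMod (p^β)) :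
    hB p α β γ δ (x + x') y = hB p α β γ δ x y + hB p α β γ δ x' y := by
  unfold hB
  split_ifs with h
  · rw [map_add, add_mul, iota_add p γ δ h.1]
  · simp

lemma hB_add_right (p α β γ δ : ℕ) (x : ZMod (p^α)) (y y' : ZMod (p^β)) :
    hB p α β γ δ x (y + y') = hB p α β γ δ x y + hB p α β γ δ x y' := by
  unfold hB
  split_ifs with h
  · rw [map_add, mul_add, iota_add p γ δ h.1]
  · simp

lemma hB_zero_left (p α β γ δ : ℕ) (y : ZMod (p^β)) : hB p α β γ δ 0 y = 0 := by
  unfold hB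
  split_ifs with h
  · haveI : NeZero (p^(γ-δ)) := ⟨(pow_pos h.1 _).ne'⟩
    simp
  · rfl

lemma hB_zero_right (p α β γ δ : ℕ) (x : ZMod (p^α)) : hB p α β γ δ x 0 = 0 := by
  unfold hB
  split_ifs with h
  · haveI : NeZero (p^(γ-δ)) := ⟨(pow_pos h.1 _).ne'⟩
    simp
  · rfl

lemma hB_neg_left (p α β γ δ : ℕ) (x : ZMod (p^α)) (y : ZMod (p^β)) :
    hB p α β γ δ (-x) y = - hB p α β γ δ x y := by
  have := hB_add_left p α β γ δ x (-x) y
  rw [add_neg_cancel, hB_zero_left] at this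
  exact eq_neg_of_add_eq_zero_right this.symm

lemma hB_one_one (p α β γ δ : ℕ) (hp : 0 < p) (h2a : γ - δ ≤ α) (h2b : γ - δ ≤ β) :
    hB p α β γ δ 1 1 = (p : ZMod (p^γ))^δ := by
  rw [hB, dif_pos ⟨hp, h2a, h2b⟩, map_one, map_one, mul_one, ZMod.val_one_eq_one_mod,
    pow_mul_mod p γ δ 1, Nat.cast_one, mul_one]

/-- Model group. -/
@[ext]
structure Heis (p α β γ δ : ℕ) where
  x : ZMod (p^α)
  y : ZMod (p^β)
  z : ZMod (p^γ)

namespace Heis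

variable {p α β γ δ : ℕ}

instance : Mul (Heis p α β γ δ) :=
  ⟨fun g h => ⟨g.x + h.x, g.y + h.y, g.z + h.z + hB p α β γ δ g.x h.y⟩⟩

instance : One (Heis p α β γ δ) := ⟨⟨0, 0, 0⟩⟩

instance : Inv (Heis p α β γ δ) :=
  ⟨fun g => ⟨-g.x, -g.y, -g.z + hB p α β γ δ g.x g.y⟩⟩

lemma mul_def (g h : Heis p α β γ δ) :
    g * h = ⟨g.x + h.x, g.y + h.y, g.z + h.z + hB p α β γ δ g.x h.y⟩ := rfl

lemma one_def : (1 : Heis p α β γ δ) = ⟨0, 0, 0⟩ := rfl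

lemma inv_def (g : Heis p α β γ δ) :
    g⁻¹ = ⟨-g.x, -g.y, -g.z + hB p α β γ δ g.x g.y⟩ := rfl

instance : Group (Heis p α β γ δ) where
  mul_assoc g h k := by
    ext <;> simp [mul_def, hB_add_left, hB_add_right] <;> abel
  one_mul g := by
    ext <;> simp [mul_def, one_def, hB_zero_left]
  mul_one g := by
    ext <;> simp [mul_def, one_def, hB_zero_right]
  inv_mul_cancel g := by
    ext <;> simp [mul_def, inv_def, one_def, hB_neg_left] <;> abel

lemma pow_x (x : ZMod (p^α)) (n : ℕ) :
    (⟨x, 0, 0⟩ : Heis p α β γ δ)^n = ⟨n • x, 0, 0⟩ := by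
  induction n with
  | zero => simp [one_def]
  | succ n ih => rw [pow_succ, ih, mul_def]; ext <;> simp [hB_zero_right, succ_nsmul] <;> ring

lemma pow_y (y : ZMod (p^β)) (n : ℕ) :
    (⟨0, y, 0⟩ : Heis p α β γ δ)^n = ⟨0, n • y, 0⟩ := by
  induction n with
  | zero => simp [one_def]
  | succ n ih => rw [pow_succ, ih, mul_def]; ext <;> simp [hB_zero_left, succ_nsmul] <;> ring

lemma pow_z (z : ZMod (p^γ)) (n : ℕ) :
    (⟨0, 0, z⟩ : Heis p α β γ δ)^n = ⟨0, 0, n • z⟩ := by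
  induction n with
  | zero => simp [one_def]
  | succ n ih => rw [pow_succ, ih, mul_def]; ext <;> simp [hB_zero_left, succ_nsmul] <;> ring

lemma comm_ac : ⁅(⟨1, 0, 0⟩ : Heis p α β γ δ), (⟨0, 0, 1⟩ : Heis p α β γ δ)⁆ = 1 := by
  ext <;>
    simp [commutatorElement_def, mul_def, inv_def, one_def, hB_zero_left, hB_zero_right]

lemma comm_bc : ⁅(⟨0, 1, 0⟩ : Heis p α β γ δ), (⟨0, 0, 1⟩ : Heis p α β γ δ)⁆ = 1 := by
  ext <;>
    simp [commutatorElement_def, mul_def, inv_def, one_def, hB_zero_left, hB_zero_right]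

lemma comm_ab : ⁅(⟨1, 0, 0⟩ : Heis p α β γ δ), (⟨0, 1, 0⟩ : Heis p α β γ δ)⁆ =
    ⟨0, 0, hB p α β γ δ 1 1⟩ := by
  ext <;>
    simp [commutatorElement_def, mul_def, inv_def, one_def, hB_zero_left, hB_zero_right,
      hB_neg_left]

end Heis

/-- the map sending generators into the model group -/
def hf (p α β γ δ : ℕ) : Fin 3 → Heis p α β γ δ :=
  ![⟨1, 0, 0⟩, ⟨0, 1, 0⟩, ⟨0, 0, 1⟩]

lemma heis_lift (p α β γ δ : ℕ) (hp : 0 < p) (h2a : γ - δ ≤ α) (h2b : γ - δ ≤ β) :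
    ∀ r ∈ pgRels p α β γ δ, FreeGroup.lift (hf p α β γ δ) r = 1 := by
  intro r hr
  simp only [pgRels, Set.mem_insert_iff, Set.mem_singleton_iff] at hr
  rcases hr with rfl | rfl | rfl | rfl | rfl | rfl
  · rw [map_commutatorElement]
    simp only [FreeGroup.lift_apply_of, hf, Matrix.cons_val_zero, Matrix.cons_val_two, Matrix.tail_cons,
      Matrix.head_cons]
    exact Heis.comm_ac
  · rw [map_commutatorElement]
    simp only [FreeGroup.lift_apply_of, hf, Matrix.cons_val_one, Matrix.cons_val_two, Matrix.tail_cons,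
      Matrix.head_cons]
    exact Heis.comm_bc
  · rw [map_pow]
    simp only [FreeGroup.lift_apply_of, hf, Matrix.cons_val_zero]
    rw [Heis.pow_x]
    ext <;> simp [Heis.one_def, nsmul_eq_mul]
  · rw [map_pow]
    simp only [FreeGroup.lift_apply_of, hf, Matrix.cons_val_one, Matrix.head_cons, Matrix.cons_val_zero]
    rw [Heis.pow_y]
    ext <;> simp [Heis.one_def, nsmul_eq_mul]
  · rw [map_pow]
    simp only [FreeGroup.lift_apply_of, hf, Matrix.cons_val_two, Matrix.tail_cons, Matrix.head_cons]
    rw [Heis.pow_z]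
    ext <;> simp [Heis.one_def, nsmul_eq_mul]
  · rw [map_mul, map_inv, map_pow, map_commutatorElement]
    simp only [FreeGroup.lift_apply_of, hf, Matrix.cons_val_zero, Matrix.cons_val_one, Matrix.head_cons,
      Matrix.cons_val_two, Matrix.tail_cons]
    rw [Heis.comm_ab, Heis.pow_z, hB_one_one p α β γ δ hp h2a h2b]
    rw [mul_inv_eq_one]
    ext <;> simp [nsmul_eq_mul]

lemma heis_orderOf_c (p α β γ δ : ℕ) (hp : 0 < p^γ) :
    orderOf ((⟨0, 0, 1⟩ : Heis p α β γ δ)) = p^γ := by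
  haveI : NeZero (p^γ) := ⟨hp.ne'⟩
  refine Nat.dvd_antisymm ?_ ?_
  · rw [orderOf_dvd_iff_pow_eq_one, Heis.pow_z]
    ext <;> simp [Heis.one_def, nsmul_eq_mul]
  · have h := pow_orderOf_eq_one ((⟨0, 0, 1⟩ : Heis p α β γ δ))
    rw [Heis.pow_z] at h
    have hz := congrArg Heis.z h
    simp only [Heis.one_def, nsmul_eq_mul, mul_one] at hz
    exact (ZMod.natCast_eq_zero_iff _ _).mp hz

/-- the map sending generators to `Multiplicative (ZMod (p^δ))`. -/
def cf (p δ : ℕ) : Fin 3 → Multiplicative (ZMod (p^δ)) :=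
  ![1, 1, Multiplicative.ofAdd 1]

lemma chi_lift (p α β γ δ : ℕ) (h1 : δ ≤ γ) :
    ∀ r ∈ pgRels p α β γ δ, FreeGroup.lift (cf p δ) r = 1 := by
  intro r hr
  simp only [pgRels, Set.mem_insert_iff, Set.mem_singleton_iff] at hr
  have habel : ∀ u v : Multiplicative (ZMod (p^δ)), ⁅u, v⁆ = 1 := fun u v =>
    commutatorElement_eq_one_iff_commute.mpr (Commute.all u v)
  have hview : ∀ n : ℕ, (Multiplicative.ofAdd (1 : ZMod (p^δ)))^n =
      Multiplicative.ofAdd ((n : ZMod (p^δ))) := by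
    intro n
    rw [← ofAdd_nsmul, nsmul_eq_mul, mul_one]
  rcases hr with rfl | rfl | rfl | rfl | rfl | rfl
  · rw [map_commutatorElement]; exact habel _ _
  · rw [map_commutatorElement]; exact habel _ _
  · rw [map_pow]
    simp [cf]
  · rw [map_pow]
    simp [cf]
  · rw [map_pow]
    simp only [FreeGroup.lift_apply_of, cf, Matrix.cons_val_two, Matrix.tail_cons, Matrix.head_cons]
    rw [hview, (ZMod.natCast_eq_zero_iff _ _).mpr (pow_dvd_pow p h1)]
    rfl
  · rw [map_mul, map_inv, map_pow, map_commutatorElement, habel]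
    simp only [FreeGroup.lift_apply_of, cf, Matrix.cons_val_two, Matrix.tail_cons, Matrix.head_cons]
    rw [hview, (ZMod.natCast_eq_zero_iff _ _).mpr dvd_rfl]
    simp


lemma comm_mul_central {G : Type*} [Group G] {z w : G}
    (hz : ∀ x, z * x = x * z) (hw : ∀ x, w * x = x * w) (g h : G) :
    ⁅g * z, h * w⁆ = ⁅g, h⁆ := by
  have h1 : z * (h * w) * z⁻¹ = h * w := by rw [hz, mul_inv_cancel_right]
  have e1 : ⁅g * z, h * w⁆ = g * (z * (h * w) * z⁻¹) * g⁻¹ * (w⁻¹ * h⁻¹) := by group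
  have h2 : w * g⁻¹ * w⁻¹ = g⁻¹ := by rw [hw, mul_inv_cancel_right]
  have e2 : g * (h * w) * g⁻¹ * (w⁻¹ * h⁻¹) = g * h * (w * g⁻¹ * w⁻¹) * h⁻¹ := by group
  rw [e1, h1, e2, h2, commutatorElement_def]

lemma rel_one (p α β γ δ : ℕ) {r : FreeGroup (Fin 3)} (hr : r ∈ pgRels p α β γ δ) :
    PresentedGroup.mk (pgRels p α β γ δ) r = 1 :=
  (QuotientGroup.eq_one_iff r).mpr (Subgroup.subset_normalClosure hr)

lemma comm_gac (p α β γ δ : ℕ) : ⁅ga p α β γ δ, gc p α β γ δ⁆ = 1 := by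
  have := rel_one p α β γ δ (show ⁅FreeGroup.of (0 : Fin 3), FreeGroup.of (2 : Fin 3)⁆ ∈
    pgRels p α β γ δ from by simp [pgRels])
  rw [map_commutatorElement] at this
  exact this

lemma comm_gbc (p α β γ δ : ℕ) : ⁅gb p α β γ δ, gc p α β γ δ⁆ = 1 := by
  have := rel_one p α β γ δ (show ⁅FreeGroup.of (1 : Fin 3), FreeGroup.of (2 : Fin 3)⁆ ∈
    pgRels p α β γ δ from by simp [pgRels])
  rw [map_commutatorElement] at this
  exact this

lemma comm_gab (p α β γ δ : ℕ) : ⁅ga p α β γ δ, gb p α β γ δ⁆ = gc p α β γ δ ^ p ^ δ := by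
  have := rel_one p α β γ δ (show ⁅FreeGroup.of (0 : Fin 3), FreeGroup.of (1 : Fin 3)⁆ *
    (FreeGroup.of (2 : Fin 3) ^ p ^ δ)⁻¹ ∈ pgRels p α β γ δ from by simp [pgRels])
  rw [map_mul, map_inv, map_pow, map_commutatorElement, mul_inv_eq_one] at this
  exact this

lemma gc_pow_gamma (p α β γ δ : ℕ) : gc p α β γ δ ^ p ^ γ = 1 := by
  have := rel_one p α β γ δ (show FreeGroup.of (2 : Fin 3) ^ p ^ γ ∈
    pgRels p α β γ δ from by simp [pgRels])
  rw [map_pow] at this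
  exact this

lemma gc_central (p α β γ δ : ℕ) (g : GG p α β γ δ) : Commute g (gc p α β γ δ) := by
  have hg : g ∈ Subgroup.centralizer {gc p α β γ δ} := by
    refine PresentedGroup.generated_by _ _ ?_ g
    intro j
    rw [Subgroup.mem_centralizer_iff]
    rintro h rfl
    fin_cases j
    · exact (commutatorElement_eq_one_iff_mul_comm.mp (comm_gac p α β γ δ)).symm
    · exact (commutatorElement_eq_one_iff_mul_comm.mp (comm_gbc p α β γ δ)).symm
    · rfl
  exact (Subgroup.mem_centralizer_iff.mp hg _ rfl).symm

end GGaux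

/-- For `G = G(α,β,γ,δ)` and `C = ⟨c⟩`: every normal subgroup `K` of `G` with `K·C = G`
contains `c^{p^δ}`; there is a normal subgroup `K` with `K·C = G` and `K ∩ C = ⟨c^{p^δ}⟩`;
consequently the minimum of `|K ∩ C|` over normal `K` with `K·C = G` is `p ^ (γ − δ)`. -/
theorem GG_extension_class_order
    (p : ℕ) (hp : p.Prime) (α β γ δ : ℕ)
    (hα : 0 < α) (hβ : 0 < β) (hγ : 0 < γ) (hδ : 0 < δ)
    (h1 : δ ≤ γ) (h2 : γ - δ ≤ min α β) :
    (∀ K : Subgroup (GG p α β γ δ), K.Normal →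
      K ⊔ Subgroup.zpowers (gc p α β γ δ) = ⊤ → gc p α β γ δ ^ p ^ δ ∈ K) ∧
    (∃ K : Subgroup (GG p α β γ δ), K.Normal ∧
      K ⊔ Subgroup.zpowers (gc p α β γ δ) = ⊤ ∧
      K ⊓ Subgroup.zpowers (gc p α β γ δ) =
        Subgroup.zpowers (gc p α β γ δ ^ p ^ δ)) ∧
    IsLeast {k : ℕ | ∃ K : Subgroup (GG p α β γ δ), K.Normal ∧
        K ⊔ Subgroup.zpowers (gc p α β γ δ) = ⊤ ∧
        Nat.card ↥(K ⊓ Subgroup.zpowers (gc p α β γ δ)) = k}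
      (p ^ (γ - δ)) := by

  classical
  obtain ⟨h2a, h2b⟩ : γ - δ ≤ α ∧ γ - δ ≤ β := ⟨le_trans h2 (min_le_left _ _), le_trans h2 (min_le_right _ _)⟩
  set c := gc p α β γ δ with hc
  set a := ga p α β γ δ with ha
  set b := gb p α β γ δ with hb
  have hab : ⁅a, b⁆ = c ^ p ^ δ := GGaux.comm_gab p α β γ δ
  have hcγ : c ^ p ^ γ = 1 := GGaux.gc_pow_gamma p α β γ δ
  -- Part 1
  have part1 : ∀ K : Subgroup (GG p α β γ δ), K.Normal →
      K ⊔ Subgroup.zpowers c = ⊤ → c ^ p ^ δ ∈ K := by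
    intro K hK hsup
    haveI := hK
    have hmem : ∀ g : GG p α β γ δ, ∃ k ∈ K, ∃ m : ℤ, g = k * c ^ m := by
      intro g
      have hg : g ∈ (↑(K ⊔ Subgroup.zpowers c) : Set (GG p α β γ δ)) := by
        rw [hsup]; simp
      rw [Subgroup.normal_mul] at hg
      obtain ⟨k, hk, z, hz, hkz⟩ := hg
      obtain ⟨m, hm⟩ := Subgroup.mem_zpowers_iff.mp hz
      exact ⟨k, hk, m, by rw [← hkz, ← hm]⟩
    obtain ⟨k₁, hk₁, m, hm⟩ := hmem a
    obtain ⟨k₂, hk₂, n, hn⟩ := hmem b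
    have hcomm : ⁅a, b⁆ = ⁅k₁, k₂⁆ := by
      rw [hm, hn]
      exact GGaux.comm_mul_central
        (fun x => (((GGaux.gc_central p α β γ δ x).zpow_right m).symm).eq)
        (fun x => (((GGaux.gc_central p α β γ δ x).zpow_right n).symm).eq) k₁ k₂
    rw [← hab, hcomm, commutatorElement_def]
    exact mul_mem (mul_mem (mul_mem hk₁ hk₂) (inv_mem hk₁)) (inv_mem hk₂)
  -- The witness subgroup
  let K : Subgroup (GG p α β γ δ) := Subgroup.normalClosure {a, b}
  haveI hKn : K.Normal := Subgroup.normalClosure_normal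
  have haK : a ∈ K := Subgroup.subset_normalClosure (Set.mem_insert _ _)
  have hbK : b ∈ K := Subgroup.subset_normalClosure (Set.mem_insert_of_mem _ rfl)
  have hcK : c ^ p ^ δ ∈ K := by
    rw [← hab, commutatorElement_def]
    exact mul_mem (mul_mem (mul_mem haK hbK) (inv_mem haK)) (inv_mem hbK)
  have hsup : K ⊔ Subgroup.zpowers c = ⊤ := by
    rw [eq_top_iff]
    intro g _
    refine PresentedGroup.generated_by _ _ ?_ g
    intro j
    fin_cases j
    · exact Subgroup.mem_sup_left haK
    · exact Subgroup.mem_sup_left hbK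
    · exact Subgroup.mem_sup_right (Subgroup.mem_zpowers _)
  have hinf : K ⊓ Subgroup.zpowers c = Subgroup.zpowers (c ^ p ^ δ) := by
    apply le_antisymm
    · rintro g ⟨hgK, hgZ⟩
      obtain ⟨m, rfl⟩ := Subgroup.mem_zpowers_iff.mp hgZ
      set χ := PresentedGroup.toGroup (GGaux.chi_lift p α β γ δ h1) with hχ
      have hker : K ≤ χ.ker := by
        apply Subgroup.normalClosure_le_normal
        rintro x hx
        rcases hx with rfl | hx
        · show χ a = 1
          rw [ha]
          show χ (PresentedGroup.of 0) = 1
          rw [PresentedGroup.toGroup.of]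
          simp [GGaux.cf]
        · rcases hx with rfl
          show χ b = 1
          rw [hb]
          show χ (PresentedGroup.of 1) = 1
          rw [PresentedGroup.toGroup.of]
          simp [GGaux.cf]
      have h0 : χ (c ^ m) = 1 := hker hgK
      have hχc : χ c = Multiplicative.ofAdd (1 : ZMod (p ^ δ)) := by
        rw [hc]
        show χ (PresentedGroup.of 2) = _
        rw [PresentedGroup.toGroup.of]
        simp [GGaux.cf]
      rw [map_zpow, hχc, ← ofAdd_zsmul] at h0
      have hm0 : ((m : ZMod (p ^ δ))) = 0 := by
        have := congrArg Multiplicative.toAdd h0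
        simpa [zsmul_eq_mul] using this
      obtain ⟨t, ht⟩ := (ZMod.intCast_zmod_eq_zero_iff_dvd m (p ^ δ)).mp hm0
      refine Subgroup.mem_zpowers_iff.mpr ⟨t, ?_⟩
      rw [← zpow_natCast c (p ^ δ), ← zpow_mul, ← ht]
    · exact le_inf (Subgroup.zpowers_le.mpr hcK)
        (Subgroup.zpowers_le.mpr (Subgroup.pow_mem _ (Subgroup.mem_zpowers c) _))
  -- order of c
  have hordc : orderOf c = p ^ γ := by
    refine Nat.dvd_antisymm (orderOf_dvd_of_pow_eq_one hcγ) ?_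
    have hmap := orderOf_map_dvd
      (PresentedGroup.toGroup (GGaux.heis_lift p α β γ δ hp.pos h2a h2b)) c
    have himg : (PresentedGroup.toGroup (GGaux.heis_lift p α β γ δ hp.pos h2a h2b)) c =
        (⟨0, 0, 1⟩ : GGaux.Heis p α β γ δ) := by
      rw [hc]
      show (PresentedGroup.toGroup _) (PresentedGroup.of 2) = _
      rw [PresentedGroup.toGroup.of]
      simp [GGaux.hf]
    rw [himg, GGaux.heis_orderOf_c p α β γ δ (pow_pos hp.pos γ)] at hmap
    exact hmap
  have hordcd : orderOf (c ^ p ^ δ) = p ^ (γ - δ) := by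
    rw [orderOf_pow' c ((pow_pos hp.pos δ).ne'), hordc]
    rw [Nat.gcd_comm, Nat.gcd_eq_left (pow_dvd_pow p h1), Nat.pow_div h1 hp.pos]
  refine ⟨part1, ⟨K, hKn, hsup, hinf⟩, ?_, ?_⟩
  · exact ⟨K, hKn, hsup, by rw [hinf, Nat.card_zpowers, hordcd]⟩
  · rintro k ⟨K', hK', hsup', rfl⟩
    have hcK' := part1 K' hK' hsup'
    have hfin : (Subgroup.zpowers c : Set (GG p α β γ δ)).Finite := by
      rw [finite_zpowers, ← orderOf_pos_iff, hordc]
      exact pow_pos hp.pos γ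
    haveI : Finite ↥(K' ⊓ Subgroup.zpowers c) := by
      apply Set.Finite.to_subtype (hfin.subset ?_)
      exact SetLike.coe_subset_coe.mpr inf_le_right
    have hle : Subgroup.zpowers (c ^ p ^ δ) ≤ K' ⊓ Subgroup.zpowers c :=
      le_inf (Subgroup.zpowers_le.mpr hcK')
        (Subgroup.zpowers_le.mpr (Subgroup.pow_mem _ (Subgroup.mem_zpowers c) _))
    calc p ^ (γ - δ) = Nat.card (Subgroup.zpowers (c ^ p ^ δ)) := by
          rw [Nat.card_zpowers, hordcd]
      _ ≤ Nat.card ↥(K' ⊓ Subgroup.zpowers c) := Subgroup.card_le_of_le hle
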